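/- For every fixed k ≥ 0 there exists a polynomial P_k with rational coefficients of degree k such that for all n ≥ k, the number of permutations w of {1,…,n} with dep(w) = k equals P_k(n). -/

import Mathlib

/-- The depth of a permutation `w` of `{1,…,n}`:
`dep(w) = ∑_{i : w(i) > i} (w(i) - i)`. -/
def dep {n : ℕ} (w : Equiv.Perm (Fin n)) : ℕ :=
  ∑ i ∈ Finset.univ.filter (fun i : Fin n => i < w i), ((w i : ℕ) - (i : ℕ))

open Finset Polynomial Equiv

/-- number of permutations of `Fin n` with depth `k` -/
def fct (k n : ℕ) : ℕ :=
  ((Finset.univ : Finset (Equiv.Perm (Fin n))).filter (fun w => dep w = k)).card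

/-- the prefix `{0,…,j-1}` is invariant under `w` -/
def Invar {n : ℕ} (w : Equiv.Perm (Fin n)) (j : ℕ) : Prop :=
  ∀ i : Fin n, (i : ℕ) < j → ((w i : ℕ) < j)

instance {n : ℕ} (w : Equiv.Perm (Fin n)) (j : ℕ) : Decidable (Invar w j) :=
  Fintype.decidableForallFintype

/-- a permutation is indecomposable: no proper nontrivial invariant prefix -/
def Ind {b : ℕ} (u : Equiv.Perm (Fin b)) : Prop :=
  ∀ j : ℕ, 0 < j → j < b → ¬ Invar u j

instance {b : ℕ} (u : Equiv.Perm (Fin b)) : Decidable (Ind u) :=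
  decidable_of_iff (∀ j < b, 0 < j → ¬ Invar u j)
    ⟨fun h j h1 h2 => h j h2 h1, fun h j h2 h1 => h j h1 h2⟩

/-- number of indecomposable permutations of `Fin b` of depth `d` -/
def act (b d : ℕ) : ℕ :=
  ((Finset.univ : Finset (Equiv.Perm (Fin b))).filter (fun u => dep u = d ∧ Ind u)).card

lemma invar_exists {n : ℕ} (w : Equiv.Perm (Fin n)) : ∃ j, 0 < j ∧ Invar w j :=
  ⟨n + 1, Nat.succ_pos n, fun i _ => (w i).isLt.trans (Nat.lt_succ_self n)⟩

/-- the first block length of a permutation -/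
def fb {n : ℕ} (w : Equiv.Perm (Fin n)) : ℕ := Nat.find (invar_exists w)

lemma fb_pos {n : ℕ} (w : Equiv.Perm (Fin n)) : 0 < fb w := (Nat.find_spec (invar_exists w)).1

lemma fb_le {n : ℕ} (w : Equiv.Perm (Fin (n + 1))) : fb w ≤ n + 1 :=
  Nat.find_le ⟨Nat.succ_pos n, fun i _ => (w i).isLt⟩

lemma fb_eq_iff {n : ℕ} (w : Equiv.Perm (Fin n)) (b : ℕ) :
    fb w = b ↔ (0 < b ∧ Invar w b) ∧ ∀ j < b, ¬ (0 < j ∧ Invar w j) := by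
  rw [fb, Nat.find_eq_iff]

lemma dep_eq_sum {n : ℕ} (w : Equiv.Perm (Fin n)) :
    dep w = ∑ i : Fin n, ((w i : ℕ) - (i : ℕ)) := by
  rw [dep, Finset.sum_filter]
  refine Finset.sum_congr rfl fun i _ => ?_
  by_cases h : i < w i
  · simp [h]
  · simp [h, Nat.sub_eq_zero_of_le (by exact_mod_cast not_lt.mp h)]

def combine {b m : ℕ} (u : Equiv.Perm (Fin b)) (v : Equiv.Perm (Fin m)) :
    Equiv.Perm (Fin (b + m)) :=
  finSumFinEquiv.permCongr (Equiv.sumCongr u v)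

lemma combine_castAdd {b m : ℕ} (u : Equiv.Perm (Fin b)) (v : Equiv.Perm (Fin m)) (x : Fin b) :
    combine u v (Fin.castAdd m x) = Fin.castAdd m (u x) := by
  simp [combine, Equiv.permCongr_apply]

lemma combine_natAdd {b m : ℕ} (u : Equiv.Perm (Fin b)) (v : Equiv.Perm (Fin m)) (x : Fin m) :
    combine u v (Fin.natAdd b x) = Fin.natAdd b (v x) := by
  simp [combine, Equiv.permCongr_apply]

lemma dep_combine {b m : ℕ} (u : Equiv.Perm (Fin b)) (v : Equiv.Perm (Fin m)) :
    dep (combine u v) = dep u + dep v := by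
  rw [dep_eq_sum, dep_eq_sum, dep_eq_sum,
    ← Equiv.sum_comp finSumFinEquiv (fun i => ((combine u v i : ℕ) - (i : ℕ))),
    Fintype.sum_sum_type]
  congr 1
  · refine Finset.sum_congr rfl fun x _ => ?_
    simp only [finSumFinEquiv_apply_left, combine_castAdd, Fin.coe_castAdd]
  · refine Finset.sum_congr rfl fun x _ => ?_
    simp only [finSumFinEquiv_apply_right, combine_natAdd, Fin.coe_natAdd]
    omega

lemma invar_combine {b m : ℕ} (u : Equiv.Perm (Fin b)) (v : Equiv.Perm (Fin m))
    {j : ℕ} (hj : j ≤ b) : Invar (combine u v) j ↔ Invar u j := by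
  constructor
  · intro h x hx
    have := h (Fin.castAdd m x) (by simpa using hx)
    simpa [combine_castAdd] using this
  · intro h i hi
    induction i using Fin.addCases with
    | left x =>
      have := h x (by simpa using hi)
      simpa [combine_castAdd] using this
    | right x =>
      exfalso
      simp only [Fin.coe_natAdd] at hi
      omega

lemma invar_combine_b {b m : ℕ} (u : Equiv.Perm (Fin b)) (v : Equiv.Perm (Fin m)) :
    Invar (combine u v) b := by
  intro i hi
  induction i using Fin.addCases with
  | left x => simpa [combine_castAdd] using (u x).isLt
  | right x => simp only [Fin.coe_natAdd] at hi; omega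

lemma dep_eq_zero_iff {n : ℕ} (w : Equiv.Perm (Fin n)) : dep w = 0 ↔ w = 1 := by
  constructor
  · intro h
    rw [dep_eq_sum] at h
    have hle : ∀ i : Fin n, (w i : ℕ) ≤ (i : ℕ) := by
      intro i
      have := Finset.sum_eq_zero_iff.mp h i (Finset.mem_univ i)
      omega
    have hsum : ∑ i : Fin n, ((w i : ℕ)) = ∑ i : Fin n, (i : ℕ) :=
      Equiv.sum_comp w (fun i => (i : ℕ))
    have : ∀ i : Fin n, (w i : ℕ) = (i : ℕ) := by
      by_contra hc
      push_neg at hc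
      obtain ⟨i, hi⟩ := hc
      have hlt : (w i : ℕ) < i := lt_of_le_of_ne (hle i) hi
      have := Finset.sum_lt_sum (fun j _ => hle j) ⟨i, Finset.mem_univ i, hlt⟩
      omega
    ext i
    exact this i
  · intro h; subst h; simp [dep_eq_sum]

lemma fct_zero (n : ℕ) : fct 0 n = 1 := by
  rw [fct]
  have : (Finset.univ : Finset (Equiv.Perm (Fin n))).filter (fun w => dep w = 0) = {1} := by
    ext w
    simp [dep_eq_zero_iff]
  rw [this, Finset.card_singleton]

lemma act_one_zero : act 1 0 = 1 := by decide

lemma act_two_one : act 2 1 = 1 := by decide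

lemma act_one_pos (d : ℕ) (hd : 0 < d) : act 1 d = 0 := by
  rw [act, Finset.card_eq_zero]
  rw [Finset.filter_eq_empty_iff]
  intro u _
  have : u = 1 := Subsingleton.elim u 1
  subst this
  simp [dep_eq_sum]
  omega

-- depth lower bound for indecomposables
lemma dep_ge_of_ind {b : ℕ} (u : Equiv.Perm (Fin b)) (hu : Ind u) : b - 1 ≤ dep u := by
  have key : dep u = ∑ j ∈ Finset.Ico 1 b,
      (Finset.univ.filter (fun i : Fin b => (i : ℕ) < j ∧ j ≤ (u i : ℕ))).card := by
    rw [dep_eq_sum]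
    have h1 : ∀ i : Fin b, ((u i : ℕ) - (i : ℕ)) =
        ∑ j ∈ Finset.Ico 1 b, (if (i : ℕ) < j ∧ j ≤ (u i : ℕ) then 1 else 0) := by
      intro i
      rw [← Finset.card_filter]
      have : Finset.filter (fun j => (i : ℕ) < j ∧ j ≤ (u i : ℕ)) (Finset.Ico 1 b)
          = Finset.Ioc (i : ℕ) (u i : ℕ) := by
        ext j
        simp only [Finset.mem_filter, Finset.mem_Ico, Finset.mem_Ioc]
        have := (u i).isLt
        omega
      rw [this, Nat.card_Ioc]
    simp_rw [h1]
    rw [Finset.sum_comm]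
    refine Finset.sum_congr rfl fun j _ => ?_
    rw [Finset.card_filter]
  rw [key]
  calc b - 1 = ∑ _j ∈ Finset.Ico 1 b, 1 := by simp
    _ ≤ _ := by
      refine Finset.sum_le_sum fun j hj => ?_
      rw [Finset.mem_Ico] at hj
      have := hu j hj.1 hj.2
      rw [Invar] at this
      push_neg at this
      obtain ⟨i, hi1, hi2⟩ := this
      rw [Nat.succ_le_iff, Finset.card_pos]
      exact ⟨i, by simp [hi1, hi2]⟩

lemma act_eq_zero {b d : ℕ} (hb : 2 ≤ b) (hbd : d + 1 < b) : act b d = 0 := by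
  rw [act, Finset.card_eq_zero, Finset.filter_eq_empty_iff]
  intro u _
  rintro ⟨hd, hind⟩
  have := dep_ge_of_ind u hind
  omega

lemma card_fiber {b m k : ℕ} (hb : 0 < b) :
    (((Finset.univ : Finset (Equiv.Perm (Fin (b + m)))).filter
      (fun w => dep w = k ∧ fb w = b)).card)
    = ∑ d ∈ Finset.range (k + 1), act b d * fct (k - d) m := by
  classical
  set D := (Finset.univ : Finset (Equiv.Perm (Fin b) × Equiv.Perm (Fin m))).filter
    (fun p => Ind p.1 ∧ dep p.1 + dep p.2 = k) with hD
  have step1 : D.card = ((Finset.univ : Finset (Equiv.Perm (Fin (b + m)))).filter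
      (fun w => dep w = k ∧ fb w = b)).card := by
    refine Finset.card_bij (fun p _ => combine p.1 p.2) ?_ ?_ ?_
    · rintro ⟨u, v⟩ hp
      simp only [hD, Finset.mem_filter, Finset.mem_univ, true_and] at hp ⊢
      refine ⟨by rw [dep_combine]; exact hp.2, ?_⟩
      rw [fb_eq_iff]
      refine ⟨⟨hb, invar_combine_b u v⟩, fun j hj => ?_⟩
      rintro ⟨hj0, hInv⟩
      exact hp.1 j hj0 hj ((invar_combine u v hj.le).mp hInv)
    · rintro ⟨u, v⟩ hp ⟨u', v'⟩ hp' h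
      have h1 : u = u' := by
        ext x
        have := congrArg (fun (e : Equiv.Perm (Fin (b+m))) => (e (Fin.castAdd m x) : ℕ)) h
        simpa [combine_castAdd] using this
      have h2 : v = v' := by
        ext x
        have := congrArg (fun (e : Equiv.Perm (Fin (b+m))) => (e (Fin.natAdd b x) : ℕ)) h
        simpa [combine_natAdd] using this
      simp [h1, h2]
    · intro w hw
      simp only [Finset.mem_filter, Finset.mem_univ, true_and] at hw
      obtain ⟨hdep, hfb⟩ := hw
      rw [fb_eq_iff] at hfb
      obtain ⟨⟨-, hInv⟩, hmin⟩ := hfb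
      have hU : ∀ x : Fin b, (w (Fin.castAdd m x) : ℕ) < b := fun x =>
        hInv _ (by simpa using x.isLt)
      set U : Fin b → Fin b := fun x => ⟨(w (Fin.castAdd m x) : ℕ), hU x⟩ with hUdef
      have hUinj : Function.Injective U := by
        intro x y hxy
        have hval := congrArg Fin.val hxy
        simp only [hUdef] at hval
        have h3 := w.injective (Fin.ext hval)
        have := congrArg Fin.val h3
        simpa [Fin.ext_iff] using this
      set u : Equiv.Perm (Fin b) := Equiv.ofBijective U
        ((Finite.injective_iff_bijective).mp hUinj) with hudef
      have hVge : ∀ x : Fin m, b ≤ (w (Fin.natAdd b x) : ℕ) := by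
        intro x
        by_contra hlt
        push_neg at hlt
        obtain ⟨y, hy⟩ := u.surjective ⟨_, hlt⟩
        have hy' : (w (Fin.castAdd m y) : ℕ) = (w (Fin.natAdd b x) : ℕ) := by
          have := congrArg Fin.val hy
          simpa [hudef, hUdef] using this
        have h2 : w (Fin.castAdd m y) = w (Fin.natAdd b x) := Fin.ext hy'
        have h3 := congrArg Fin.val (w.injective h2)
        simp only [Fin.coe_castAdd, Fin.coe_natAdd] at h3
        have := y.isLt
        omega
      set V : Fin m → Fin m := fun x => ⟨(w (Fin.natAdd b x) : ℕ) - b, by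
        have h1 := (w (Fin.natAdd b x)).isLt
        have h2 := hVge x
        omega⟩ with hVdef
      have hVinj : Function.Injective V := by
        intro x y hxy
        have h1 := congrArg Fin.val hxy
        simp only [hVdef] at h1
        have h2 : (w (Fin.natAdd b x) : ℕ) = (w (Fin.natAdd b y) : ℕ) := by
          have := hVge x; have := hVge y; omega
        have h3 := congrArg Fin.val (w.injective (Fin.ext h2))
        simp only [Fin.coe_natAdd] at h3
        exact Fin.ext (by omega)
      set v : Equiv.Perm (Fin m) := Equiv.ofBijective V
        ((Finite.injective_iff_bijective).mp hVinj) with hvdef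
      have hcomb : combine u v = w := by
        apply Equiv.ext
        intro i
        induction i using Fin.addCases with
        | left x =>
          rw [combine_castAdd]
          exact Fin.ext (by simp [hudef, hUdef])
        | right x =>
          rw [combine_natAdd]
          refine Fin.ext ?_
          simp only [Fin.coe_natAdd, hvdef, hVdef, Equiv.ofBijective_apply]
          have := hVge x
          omega
      refine ⟨(u, v), ?_, hcomb⟩
      simp only [hD, Finset.mem_filter, Finset.mem_univ, true_and]
      constructor
      · intro j hj0 hjb hInvu
        refine hmin j hjb ⟨hj0, ?_⟩
        rw [← hcomb]
        exact (invar_combine u v hjb.le).mpr hInvu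
      · rw [← dep_combine, hcomb, hdep]
  rw [← step1]
  rw [Finset.card_eq_sum_card_fiberwise (f := fun p => dep p.1) (s := D)
    (t := Finset.range (k + 1)) (fun p hp => by
      simp only [Finset.mem_coe, hD, Finset.mem_filter] at hp
      simp only [Finset.mem_coe, Finset.mem_range]
      omega)]
  refine Finset.sum_congr rfl fun d hd => ?_
  rw [Finset.mem_range] at hd
  have hset : D.filter (fun p => dep p.1 = d) =
      ((Finset.univ : Finset (Equiv.Perm (Fin b))).filter (fun u => dep u = d ∧ Ind u)) ×ˢ
      ((Finset.univ : Finset (Equiv.Perm (Fin m))).filter (fun v => dep v = k - d)) := by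
    ext ⟨u, v⟩
    simp only [hD, Finset.mem_filter, Finset.mem_univ, true_and, Finset.mem_product]
    constructor
    · rintro ⟨⟨h1, h2⟩, h3⟩
      exact ⟨⟨h3, h1⟩, by omega⟩
    · rintro ⟨⟨h1, h2⟩, h3⟩
      exact ⟨⟨h2, by omega⟩, h1⟩
  rw [hset, Finset.card_product]
  rfl

lemma recur (k n : ℕ) :
    fct k (n + 1) = ∑ b ∈ Finset.Icc 1 (n + 1), ∑ d ∈ Finset.range (k + 1),
      act b d * fct (k - d) (n + 1 - b) := by
  classical
  rw [fct, Finset.card_eq_sum_card_fiberwise (f := fb) (t := Finset.Icc 1 (n + 1))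
    (fun w _ => Finset.mem_Icc.mpr ⟨fb_pos w, fb_le w⟩)]
  refine Finset.sum_congr rfl fun b hb => ?_
  rw [Finset.mem_Icc] at hb
  obtain ⟨m, hm⟩ := Nat.le.dest hb.2
  rw [Finset.filter_filter, ← hm, Nat.add_sub_cancel_left]
  exact card_fiber hb.1

lemma recur' (k n : ℕ) (hn : k + 1 ≤ n) :
    fct (k + 1) (n + 1) = fct (k + 1) n + ∑ d ∈ Finset.Icc 1 (k + 1),
      ∑ b ∈ Finset.Icc 2 (d + 1), act b d * fct (k + 1 - d) (n + 1 - b) := by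
  rw [recur]
  have hsplit : Finset.Icc 1 (n + 1) = insert 1 (Finset.Icc 2 (n + 1)) := by
    ext x; simp only [Finset.mem_Icc, Finset.mem_insert]; omega
  rw [hsplit, Finset.sum_insert (by simp)]
  congr 1
  · -- b = 1 term
    rw [Finset.sum_eq_single 0]
    · simp [act_one_zero]
    · intro d _ hd
      rw [act_one_pos d (Nat.pos_of_ne_zero hd), zero_mul]
    · simp
  · -- b ≥ 2 terms
    rw [← Finset.sum_subset (Finset.Icc_subset_Icc_right (by omega :
        (k:ℕ) + 2 ≤ n + 1)) (fun b hb hb2 => ?_)]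
    · rw [Finset.sum_comm]
      rw [← Finset.sum_subset (show Finset.Icc 1 (k+1) ⊆ Finset.range (k+2) from
          fun d hd => by simp only [Finset.mem_Icc] at hd; simp only [Finset.mem_range]; omega)
          (fun d hd hd2 => ?_)]
      · refine Finset.sum_congr rfl fun d hd => ?_
        rw [Finset.mem_Icc] at hd
        rw [← Finset.sum_subset (Finset.Icc_subset_Icc_right (by omega : d + 1 ≤ k + 2))
            (fun b hb hb2 => ?_)]
        simp only [Finset.mem_Icc] at hb hb2
        rw [act_eq_zero hb.1 (by omega), zero_mul]
      · -- d = 0 case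
        simp only [Finset.mem_range, Finset.mem_Icc] at hd hd2
        have hd0 : d = 0 := by omega
        subst hd0
        refine Finset.sum_eq_zero fun b hb => ?_
        simp only [Finset.mem_Icc] at hb
        rw [act_eq_zero hb.1 (by omega), zero_mul]
    · -- b > k + 2
      simp only [Finset.mem_Icc] at hb hb2
      refine Finset.sum_eq_zero fun d hd => ?_
      simp only [Finset.mem_range] at hd
      rw [act_eq_zero hb.1 (by omega), zero_mul]

lemma exists_antideriv (m : ℕ) : ∀ (R : Polynomial ℚ), R.degree ≤ (m : WithBot ℕ) →
    ∃ S : Polynomial ℚ, (∀ x : ℚ, S.eval x - S.eval (x - 1) = R.eval x) ∧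
      S.degree ≤ ((m + 1 : ℕ) : WithBot ℕ) := by
  induction m with
  | zero =>
    intro R hR
    obtain ⟨c, rfl⟩ : ∃ c, R = C c :=
      ⟨R.coeff 0, Polynomial.eq_C_of_degree_le_zero (by exact_mod_cast hR)⟩
    refine ⟨C c * X, fun x => by simp; ring, ?_⟩
    have h : (C c * X : Polynomial ℚ).degree ≤ 1 := by
      refine (Polynomial.degree_mul_le _ _).trans ?_
      have h1 : (C c : Polynomial ℚ).degree ≤ 0 := Polynomial.degree_C_le
      have h2 : (X : Polynomial ℚ).degree ≤ 1 := Polynomial.degree_X_le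
      calc (C c : Polynomial ℚ).degree + (X : Polynomial ℚ).degree ≤ 0 + 1 := add_le_add h1 h2
        _ = 1 := by rw [zero_add]
    exact h.trans (by norm_num)
  | succ m ih =>
    intro R hR
    set c : ℚ := R.coeff (m + 1) with hc
    set q : Polynomial ℚ := ∏ i ∈ Finset.range (m + 1), (X - C ((i : ℚ) + 1)) with hq
    have hqmonic : q.Monic :=
      Polynomial.monic_prod_of_monic _ _ (fun i _ => Polynomial.monic_X_sub_C _)
    have hqdeg : q.natDegree = m + 1 := by
      rw [hq, Polynomial.natDegree_prod _ _ (fun i _ => Polynomial.X_sub_C_ne_zero _)]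
      simp only [Polynomial.natDegree_X_sub_C]
      rw [Finset.sum_const, Finset.card_range, smul_eq_mul, mul_one]
    set R' : Polynomial ℚ := R - C c * q with hR'
    have hR'deg : R'.degree ≤ (m : WithBot ℕ) := by
      refine Polynomial.degree_le_iff_coeff_zero _ _ |>.mpr fun i hi => ?_
      have hi' : m < i := by exact_mod_cast hi
      rcases eq_or_lt_of_le (Nat.succ_le_of_lt hi') with h | h
      · rw [hR', Polynomial.coeff_sub, Polynomial.coeff_C_mul, ← h]
        have hq1 : q.coeff (m + 1) = 1 := by
          have := hqmonic.coeff_natDegree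
          rwa [hqdeg] at this
        rw [hq1, mul_one, hc, sub_self]
      · have h1 : R.coeff i = 0 := Polynomial.coeff_eq_zero_of_degree_lt
          (lt_of_le_of_lt hR (by exact_mod_cast h))
        have h2 : q.coeff i = 0 := Polynomial.coeff_eq_zero_of_natDegree_lt (by omega)
        rw [hR', Polynomial.coeff_sub, Polynomial.coeff_C_mul, h1, h2, mul_zero, sub_self]
    obtain ⟨S', hS'1, hS'2⟩ := ih R' hR'deg
    set p : Polynomial ℚ := ∏ i ∈ Finset.range (m + 2), (X - C (i : ℚ)) with hp
    have hpdeg : p.natDegree = m + 2 := by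
      rw [hp, Polynomial.natDegree_prod _ _ (fun i _ => Polynomial.X_sub_C_ne_zero _)]
      simp only [Polynomial.natDegree_X_sub_C]
      rw [Finset.sum_const, Finset.card_range, smul_eq_mul, mul_one]
    have keyp : ∀ x : ℚ, p.eval x - p.eval (x - 1) = (m + 2) * q.eval x := by
      intro x
      have h1 : p.eval x = x * q.eval x := by
        simp only [hp, hq, Polynomial.eval_prod, Polynomial.eval_sub, Polynomial.eval_X,
          Polynomial.eval_C]
        rw [Finset.prod_range_succ']
        push_cast
        ring
      have h2 : p.eval (x - 1) = q.eval x * (x - ((m : ℚ) + 2)) := by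
        simp only [hp, hq, Polynomial.eval_prod, Polynomial.eval_sub, Polynomial.eval_X,
          Polynomial.eval_C]
        rw [Finset.prod_range_succ]
        push_cast
        congr 1
        · exact Finset.prod_congr rfl fun i _ => by ring
        · ring
      rw [h1, h2]
      ring
    refine ⟨S' + C (c / ((m : ℚ) + 2)) * p, fun x => ?_, ?_⟩
    · simp only [Polynomial.eval_add, Polynomial.eval_mul, Polynomial.eval_C]
      have hne : ((m : ℚ) + 2) ≠ 0 := by positivity
      have hRx : R.eval x = R'.eval x + c * q.eval x := by
        rw [hR']; simp
      have e1 : S'.eval x + c / ((m:ℚ)+2) * p.eval x -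
          (S'.eval (x-1) + c / ((m:ℚ)+2) * p.eval (x-1))
          = (S'.eval x - S'.eval (x-1)) + c / ((m:ℚ)+2) * (p.eval x - p.eval (x-1)) := by
        ring
      rw [e1, hS'1 x, keyp x, hRx]
      field_simp
    · refine (Polynomial.degree_add_le _ _).trans (max_le ?_ ?_)
      · exact hS'2.trans (by exact_mod_cast WithBot.coe_le_coe.mpr (by omega))
      · refine (Polynomial.degree_mul_le _ _).trans ?_
        have hple : p.degree ≤ ((m + 2 : ℕ) : WithBot ℕ) :=
          Polynomial.natDegree_le_iff_degree_le.mp (le_of_eq hpdeg)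
        calc (C (c / ((m:ℚ)+2))).degree + p.degree ≤ 0 + ((m+2 : ℕ) : WithBot ℕ) :=
              add_le_add Polynomial.degree_C_le hple
          _ ≤ _ := by rw [zero_add]

lemma exists_antideriv' (m : ℕ) (R : Polynomial ℚ) (hR : R.degree = (m : WithBot ℕ)) :
    ∃ S : Polynomial ℚ, (∀ x : ℚ, S.eval x - S.eval (x - 1) = R.eval x) ∧
      S.degree = ((m + 1 : ℕ) : WithBot ℕ) := by
  obtain ⟨S, hS1, hS2⟩ := exists_antideriv m R hR.le
  refine ⟨S, hS1, ?_⟩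
  have hD : S - S.comp (X - C 1) = R := by
    apply Polynomial.funext
    intro x
    simp only [Polynomial.eval_sub, Polynomial.eval_comp, Polynomial.eval_X, Polynomial.eval_C]
    exact hS1 x
  have hS0 : S ≠ 0 := by
    rintro rfl
    rw [zero_sub] at hD
    have h0 : R = 0 := by rw [← hD]; simp
    rw [h0, Polynomial.degree_zero] at hR
    exact absurd hR (by simp)
  have hq1 : ((X - C 1 : Polynomial ℚ)).natDegree = 1 := Polynomial.natDegree_X_sub_C 1
  have hlc : (S.comp (X - C 1)).leadingCoeff = S.leadingCoeff := by
    rw [Polynomial.leadingCoeff_comp (by rw [hq1]; norm_num)]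
    have : (X - C (1:ℚ)).leadingCoeff = 1 := Polynomial.monic_X_sub_C 1
    rw [this, one_pow, mul_one]
  have hcomp0 : S.comp (X - C 1) ≠ 0 := by
    intro h
    apply hS0
    rw [← Polynomial.leadingCoeff_eq_zero, ← hlc, h, Polynomial.leadingCoeff_zero]
  have hdeg_comp : (S.comp (X - C 1)).degree = S.degree := by
    rw [Polynomial.degree_eq_natDegree hcomp0, Polynomial.degree_eq_natDegree hS0,
      Polynomial.natDegree_comp, hq1, mul_one]
  have hlt : R.degree < S.degree := by
    rw [← hD]
    exact Polynomial.degree_sub_lt hdeg_comp.symm hS0 hlc.symm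
  rw [hR] at hlt
  rw [Polynomial.degree_eq_natDegree hS0] at hlt hS2 ⊢
  have h1 : m < S.natDegree := by exact_mod_cast hlt
  have h2 : S.natDegree ≤ m + 1 := by exact_mod_cast hS2
  norm_cast
  omega


lemma degree_comp_linear (P : Polynomial ℚ) (c : ℚ) :
    (P.comp (X - C c)).degree = P.degree := by
  by_cases hP : P = 0
  · simp [hP]
  have hq1 : ((X - C c : Polynomial ℚ)).natDegree = 1 := Polynomial.natDegree_X_sub_C c
  have hlc : (P.comp (X - C c)).leadingCoeff = P.leadingCoeff := by
    rw [Polynomial.leadingCoeff_comp (by rw [hq1]; norm_num)]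
    have : (X - C c).leadingCoeff = 1 := Polynomial.monic_X_sub_C c
    rw [this, one_pow, mul_one]
  have hcomp0 : P.comp (X - C c) ≠ 0 := by
    intro h
    apply hP
    rw [← Polynomial.leadingCoeff_eq_zero, ← hlc, h, Polynomial.leadingCoeff_zero]
  rw [Polynomial.degree_eq_natDegree hcomp0, Polynomial.degree_eq_natDegree hP,
    Polynomial.natDegree_comp, hq1, mul_one]

/-- For every fixed `k ≥ 0` there is a polynomial `P_k` with rational
coefficients of degree `k` such that for all `n ≥ k`, the number of
permutations `w` of `{1,…,n}` with `dep(w) = k` equals `P_k(n)`. -/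
theorem card_depth_eq_polynomial (k : ℕ) :
    ∃ P : Polynomial ℚ, P.degree = (k : WithBot ℕ) ∧
      ∀ n : ℕ, k ≤ n →
        (((Finset.univ.filter (fun w : Equiv.Perm (Fin n) => dep w = k)).card : ℚ)
          = P.eval (n : ℚ)) := by
  induction k using Nat.strong_induction_on with
  | _ k IH =>
  match k with
  | 0 =>
    refine ⟨C 1, by simp, fun n _ => ?_⟩
    have : ((Finset.univ.filter (fun w : Equiv.Perm (Fin n) => dep w = 0)).card : ℚ)
        = (fct 0 n : ℚ) := rfl
    rw [this, fct_zero]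
    simp
  | K + 1 =>
    classical
    set Q : ℕ → Polynomial ℚ := fun j =>
      if h : j < K + 1 then (IH j h).choose else 0 with hQdef
    have hQdeg : ∀ j, j < K + 1 → (Q j).degree = (j : WithBot ℕ) := by
      intro j hj
      simp only [hQdef, dif_pos hj]
      exact (IH j hj).choose_spec.1
    have hQeval : ∀ j, j < K + 1 → ∀ n : ℕ, j ≤ n → (fct j n : ℚ) = (Q j).eval (n : ℚ) := by
      intro j hj n hn
      have := (IH j hj).choose_spec.2 n hn
      simp only [hQdef, dif_pos hj]
      exact this
    set R : Polynomial ℚ := ∑ d ∈ Finset.Icc 1 (K + 1), ∑ b ∈ Finset.Icc 2 (d + 1),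
      C ((act b d : ℚ)) * (Q (K + 1 - d)).comp (X - C (b : ℚ)) with hRdef
    -- degree of R is K
    have hsplit : Finset.Icc 1 (K + 1) = insert 1 (Finset.Icc 2 (K + 1)) := by
      ext x; simp only [Finset.mem_Icc, Finset.mem_insert]; omega
    have hT1 : ∑ b ∈ Finset.Icc 2 (1 + 1), C ((act b 1 : ℚ)) * (Q (K + 1 - 1)).comp (X - C (b : ℚ))
        = (Q K).comp (X - C (2 : ℚ)) := by
      have : Finset.Icc 2 (1 + 1) = {2} := rfl
      rw [this, Finset.sum_singleton, act_two_one]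
      norm_num
    have hRsplit : R = (Q K).comp (X - C (2 : ℚ)) + ∑ d ∈ Finset.Icc 2 (K + 1),
        ∑ b ∈ Finset.Icc 2 (d + 1), C ((act b d : ℚ)) * (Q (K + 1 - d)).comp (X - C (b : ℚ)) := by
      rw [hRdef, hsplit, Finset.sum_insert (by simp), hT1]
    have hTop : ((Q K).comp (X - C (2 : ℚ))).degree = (K : WithBot ℕ) := by
      rw [degree_comp_linear, hQdeg K (by omega)]
    have hElt : (∑ d ∈ Finset.Icc 2 (K + 1), ∑ b ∈ Finset.Icc 2 (d + 1),
        C ((act b d : ℚ)) * (Q (K + 1 - d)).comp (X - C (b : ℚ))).degree < (K : WithBot ℕ) := by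
      refine lt_of_le_of_lt (Polynomial.degree_sum_le _ _) ?_
      rw [Finset.sup_lt_iff (by exact WithBot.bot_lt_coe K)]
      intro d hd
      rw [Finset.mem_Icc] at hd
      refine lt_of_le_of_lt (Polynomial.degree_sum_le _ _) ?_
      rw [Finset.sup_lt_iff (by exact WithBot.bot_lt_coe K)]
      intro b _
      refine lt_of_le_of_lt (Polynomial.degree_mul_le _ _) ?_
      have h1 : (C ((act b d : ℚ))).degree ≤ 0 := Polynomial.degree_C_le
      have h2 : ((Q (K + 1 - d)).comp (X - C (b : ℚ))).degree = ((K + 1 - d : ℕ) : WithBot ℕ) := by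
        rw [degree_comp_linear, hQdeg (K + 1 - d) (by omega)]
      calc (C ((act b d : ℚ))).degree + ((Q (K + 1 - d)).comp (X - C (b : ℚ))).degree
          ≤ 0 + ((K + 1 - d : ℕ) : WithBot ℕ) := add_le_add h1 h2.le
        _ = ((K + 1 - d : ℕ) : WithBot ℕ) := by rw [zero_add]
        _ < (K : WithBot ℕ) := by
            rw [Nat.cast_lt]
            omega
    have hRdeg : R.degree = (K : WithBot ℕ) := by
      rw [hRsplit]
      rw [Polynomial.degree_add_eq_left_of_degree_lt (by rw [hTop]; exact hElt), hTop]
    obtain ⟨S, hS1, hS2⟩ := exists_antideriv' K R hRdeg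
    set P : Polynomial ℚ := S + C ((fct (K + 1) (K + 1) : ℚ) - S.eval ((K + 1 : ℕ) : ℚ))
      with hPdef
    have hPdeg : P.degree = ((K + 1 : ℕ) : WithBot ℕ) := by
      rw [hPdef, Polynomial.degree_add_eq_left_of_degree_lt, hS2]
      rw [hS2]
      refine lt_of_le_of_lt Polynomial.degree_C_le ?_
      exact_mod_cast Nat.succ_pos K
    have hPeval : ∀ n : ℕ, K + 1 ≤ n → (fct (K + 1) n : ℚ) = P.eval (n : ℚ) := by
      intro n hn
      induction n, hn using Nat.le_induction with
      | base =>
        simp only [hPdef, Polynomial.eval_add, Polynomial.eval_C]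
        ring
      | succ n hn ihn =>
        have hrec := recur' K n hn
        have hcast : (fct (K + 1) (n + 1) : ℚ) = (fct (K + 1) n : ℚ) + R.eval ((n + 1 : ℕ) : ℚ) := by
          rw [hrec]
          push_cast
          congr 1
          rw [hRdef, Polynomial.eval_finset_sum]
          refine Finset.sum_congr rfl fun d hd => ?_
          rw [Polynomial.eval_finset_sum]
          refine Finset.sum_congr rfl fun b hb => ?_
          rw [Finset.mem_Icc] at hd hb
          simp only [Polynomial.eval_mul, Polynomial.eval_C, Polynomial.eval_comp,
            Polynomial.eval_sub, Polynomial.eval_X]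
          congr 1
          have hble : b ≤ n + 1 := by omega
          have h1 : ((n : ℚ) + 1) - (b : ℚ) = ((n + 1 - b : ℕ) : ℚ) := by
            rw [Nat.cast_sub hble]
            push_cast
            ring
          rw [h1, ← hQeval (K + 1 - d) (by omega) (n + 1 - b) (by omega)]
        have hPdiff : P.eval ((n + 1 : ℕ) : ℚ) = P.eval ((n : ℕ) : ℚ) + R.eval ((n + 1 : ℕ) : ℚ) := by
          have h2 := hS1 ((n + 1 : ℕ) : ℚ)
          have h3 : ((n + 1 : ℕ) : ℚ) - 1 = ((n : ℕ) : ℚ) := by push_cast; ring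
          rw [h3] at h2
          simp only [hPdef, Polynomial.eval_add, Polynomial.eval_C]
          linarith
        rw [hcast, ihn, hPdiff]
    refine ⟨P, hPdeg, fun n hn => ?_⟩
    have : ((Finset.univ.filter (fun w : Equiv.Perm (Fin n) => dep w = K + 1)).card : ℚ)
        = (fct (K + 1) n : ℚ) := rfl
    rw [this]
    exact_mod_cast hPeval n hn
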